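/- arXiv:1604.00103 — 4 statements merged into one kernel-verified Lean document; each statement's English description precedes it below -/
import Mathlib

section
/- Suppose the functions P_n satisfy the differential-equation system dP_1/dx = −(λ + ξ(x)) P_1(x) and dP_n/dx = −(λ + ξ(x)) P_n(x) + λ P_{n−1}(x) for n ≥ 2. Then for every x ≥ 0 and every n ≥ 1, P_n(x) = (1 − G(x)) e^{−λx} Σ_{k=1}^n P_k(0) (λx)^{n−k} / (n−k)!. -/
open Finset MeasureTheory

/-- Closed-form solution of the differential-equation system
`dP_1/dx = −(λ + ξ(x)) P_1(x)` and
`dP_n/dx = −(λ + ξ(x)) P_n(x) + λ P_{n−1}(x)` for `n ≥ 2`: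
for every `x ≥ 0` and `n ≥ 1`,
`P_n(x) = (1 − G(x)) e^{−λx} Σ_{k=1}^n P_k(0) (λx)^{n−k}/(n−k)!`. -/
theorem solution_of_balance_odes
    (lam : ℝ) (hlam : 0 < lam)
    (g : ℝ → ℝ) (hgnonneg : ∀ x, 0 ≤ g x)
    (hgprob : ∫ x in Set.Ioi (0 : ℝ), g x = 1)
    (G : ℝ → ℝ) (hGdef : ∀ x, G x = ∫ u in Set.Ioc (0 : ℝ) x, g u)
    (hG' : ∀ x, HasDerivAt G (g x) x)
    (hGlt : ∀ x, 0 ≤ x → G x < 1)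
    (xi : ℝ → ℝ) (hxi : ∀ x, xi x = g x / (1 - G x))
    (P : ℕ → ℝ → ℝ)
    (hdiff : ∀ n, 1 ≤ n → Differentiable ℝ (P n))
    (hode1 : ∀ x, 0 ≤ x → deriv (P 1) x = -(lam + xi x) * P 1 x)
    (hode : ∀ n, 2 ≤ n → ∀ x, 0 ≤ x →
      deriv (P n) x = -(lam + xi x) * P n x + lam * P (n - 1) x) :
    ∀ x, 0 ≤ x → ∀ n, 1 ≤ n →
      P n x = (1 - G x) * Real.exp (-lam * x) *
        ∑ k ∈ Finset.Icc 1 n, P k 0 * (lam * x) ^ (n - k) / (Nat.factorial (n - k)) := by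
  have hG0 : G 0 = 0 := by rw [hGdef]; simp
  have hpos : ∀ x, 0 ≤ x → 0 < 1 - G x := fun x hx => by linarith [hGlt x hx]
  set h : ℝ → ℝ := fun x => Real.exp (lam * x) / (1 - G x) with hh
  have hh0 : h 0 = 1 := by simp [hh, hG0]
  have hGc : Continuous G := by
    rw [continuous_iff_continuousAt]
    exact fun x => (hG' x).differentiableAt.continuousAt
  have hhc : ContinuousOn h (Set.Ici 0) := by
    apply ContinuousOn.div
    · exact (Real.continuous_exp.comp (continuous_const.mul continuous_id)).continuousOn
    · exact (continuous_const.sub hGc).continuousOn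
    · exact fun x hx => (hpos x hx).ne'
  have hhderiv : ∀ x, 0 ≤ x → HasDerivAt h ((lam + xi x) * h x) x := by
    intro x hx
    have he : HasDerivAt (fun y => Real.exp (lam * y)) (lam * Real.exp (lam * x)) x := by
      have := ((hasDerivAt_id x).const_mul lam).exp
      simpa [mul_comm] using this
    have hg1 : HasDerivAt (fun y => 1 - G y) (-g x) x := (hG' x).const_sub 1
    have := he.div hg1 (hpos x hx).ne'
    refine this.congr_deriv ?_
    rw [hxi, hh]
    have hne : (1 : ℝ) - G x ≠ 0 := (hpos x hx).ne'
    field_simp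
    ring
  set S : ℕ → ℝ → ℝ := fun n x => P n x * h x with hS
  set T : ℕ → ℝ → ℝ :=
    fun n x => ∑ k ∈ Finset.Icc 1 n, P k 0 * (lam * x) ^ (n - k) / (Nat.factorial (n - k))
    with hT
  have hS0 : ∀ n, S n 0 = P n 0 := by intro n; simp [hS, hh0]
  have hT1 : T 1 = fun _ => P 1 0 := by
    funext y; simp [hT]
  have hT0 : ∀ n, 1 ≤ n → T n 0 = P n 0 := by
    intro n hn
    have hrfl : T n 0 = ∑ k ∈ Finset.Icc 1 n,
        P k 0 * (lam * 0) ^ (n - k) / (Nat.factorial (n - k) : ℝ) := rfl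
    rw [hrfl, Finset.sum_eq_single n]
    · simp
    · intro k hk hkn
      simp only [Finset.mem_Icc] at hk
      have : n - k ≠ 0 := by omega
      simp [this]
    · intro hn'
      exact absurd (Finset.mem_Icc.mpr ⟨hn, le_rfl⟩) hn'
  -- derivative of S
  have hSderiv1 : ∀ x, 0 ≤ x → HasDerivAt (S 1) 0 x := by
    intro x hx
    have := ((hdiff 1 le_rfl).differentiableAt.hasDerivAt).mul (hhderiv x hx)
    refine this.congr_deriv ?_
    rw [hode1 x hx]
    ring
  have hSderiv : ∀ n, 2 ≤ n → ∀ x, 0 ≤ x →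
      HasDerivAt (S n) (lam * S (n - 1) x) x := by
    intro n hn x hx
    have := ((hdiff n (by omega)).differentiableAt.hasDerivAt).mul (hhderiv x hx)
    refine this.congr_deriv ?_
    rw [hode n hn x hx, hS]
    ring
  -- derivative of T
  have hTderiv : ∀ n, 1 ≤ n → ∀ x : ℝ, HasDerivAt (T (n + 1)) (lam * T n x) x := by
    intro n hn x
    have hterm : ∀ k ∈ Finset.Icc 1 (n + 1),
        HasDerivAt (fun y => P k 0 * (lam * y) ^ (n + 1 - k) / (Nat.factorial (n + 1 - k) : ℝ))
          (P k 0 * (((n + 1 - k : ℕ) : ℝ) * (lam * x) ^ (n - k) * lam) /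
            (Nat.factorial (n + 1 - k) : ℝ)) x := by
      intro k hk
      have hp : HasDerivAt (fun y => (lam * y) ^ (n + 1 - k))
          (((n + 1 - k : ℕ) : ℝ) * (lam * x) ^ (n + 1 - k - 1) * lam) x := by
        have hl : HasDerivAt (fun y => lam * y) lam x := by
          simpa using (hasDerivAt_id x).const_mul lam
        exact hl.pow (n + 1 - k)
      have hnk : n + 1 - k - 1 = n - k := by omega
      rw [hnk] at hp
      exact (hp.const_mul (P k 0)).div_const _
    have hsum := HasDerivAt.fun_sum hterm
    refine hsum.congr_deriv ?_
    rw [hT]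
    rw [Finset.sum_Icc_succ_top (by omega : 1 ≤ n + 1)]
    simp only [Nat.sub_self, Nat.cast_zero, zero_mul, mul_zero, zero_div, add_zero]
    rw [Finset.mul_sum]
    apply Finset.sum_congr rfl
    intro k hk
    simp only [Finset.mem_Icc] at hk
    have h1 : n + 1 - k = (n - k) + 1 := by omega
    rw [h1, Nat.factorial_succ]
    have hf : ((Nat.factorial (n - k) : ℝ)) ≠ 0 :=
      Nat.cast_ne_zero.mpr (Nat.factorial_ne_zero _)
    have hm : (((n - k) + 1 : ℕ) : ℝ) ≠ 0 := by positivity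
    push_cast
    field_simp
  have hTcont : ∀ n, 1 ≤ n → Continuous (T n) := by
    intro n hn
    rcases Nat.exists_eq_add_of_le hn with ⟨m, rfl⟩
    rcases m with _ | m
    · rw [hT1]; exact continuous_const
    · rw [continuous_iff_continuousAt]
      intro x
      have := hTderiv (1 + m) (by omega) x
      have h2 : 1 + (m + 1) = (1 + m) + 1 := by omega
      rw [h2]
      exact this.differentiableAt.continuousAt
  have hScont : ∀ n, 1 ≤ n → ContinuousOn (S n) (Set.Ici 0) := by
    intro n hn
    exact ((hdiff n hn).continuous.continuousOn).mul hhc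
  -- main claim
  have main : ∀ n, 1 ≤ n → ∀ x, 0 ≤ x → S n x = T n x := by
    intro n hn
    induction n, hn using Nat.le_induction with
    | base =>
      intro x hx
      have key := constant_of_has_deriv_right_zero (f := S 1) (a := 0) (b := x)
        ((hScont 1 le_rfl).mono (fun y hy => hy.1))
        (fun y hy => (hSderiv1 y hy.1).hasDerivWithinAt)
        x (Set.mem_Icc.mpr ⟨hx, le_rfl⟩)
      rw [key, hS0, hT1]
    | succ n hn ih =>
      intro x hx
      set D : ℝ → ℝ := fun y => S (n + 1) y - T (n + 1) y with hD
      have hDcont : ContinuousOn D (Set.Icc 0 x) :=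
        (((hScont (n + 1) (by omega)).mono (fun y hy => hy.1)).sub
          (hTcont (n + 1) (by omega)).continuousOn)
      have hDder : ∀ y ∈ Set.Ico 0 x, HasDerivWithinAt D 0 (Set.Ici y) y := by
        intro y hy
        have hs := hSderiv (n + 1) (by omega) y hy.1
        have h1 : n + 1 - 1 = n := by omega
        rw [h1] at hs
        have hd := hs.sub (hTderiv n hn y)
        have h0 : lam * S n y - lam * T n y = 0 := by
          rw [ih y hy.1]; ring
        rw [h0] at hd
        exact hd.hasDerivWithinAt
      have key := constant_of_has_deriv_right_zero hDcont hDder x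
        (Set.mem_Icc.mpr ⟨hx, le_rfl⟩)
      have hD0 : D 0 = 0 := by
        rw [hD]; simp only
        rw [hS0, hT0 (n + 1) (by omega)]; ring
      have : D x = 0 := by rw [key, hD0]
      rw [hD] at this
      simp only at this
      linarith
  -- conclusion
  intro x hx n hn
  have hmain := main n hn x hx
  rw [hS, hh] at hmain
  simp only at hmain
  have hne : (1 : ℝ) - G x ≠ 0 := (hpos x hx).ne'
  have hexp : Real.exp (-lam * x) = (Real.exp (lam * x))⁻¹ := by
    rw [← Real.exp_neg]; ring_nf
  rw [show (∑ k ∈ Finset.Icc 1 n, P k 0 * (lam * x) ^ (n - k) / (Nat.factorial (n - k) : ℝ))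
      = T n x from rfl, ← hmain, hexp]
  field_simp
end

section
/- Suppose the functions P_n satisfy the differential-equation system dP_1/dx = −(λ + ξ(x)) P_1(x) and dP_n/dx = −(λ + ξ(x)) P_n(x) + λ P_{n−1}(x) for n ≥ 2, with Σ_{n=1}^∞ P_n(0) z^n absolutely convergent for z ∈ [0,1). Then for every z ∈ [0,1) and x ≥ 0, the generating function P(z; x) := Σ_{n=1}^∞ P_n(x) z^n satisfies P(z; x) = P(z; 0) (1 − G(x)) exp(−λ(1−z)x). -/
open Finset MeasureTheory

theorem real_exp_eq_tsum (y : ℝ) : Real.exp y = ∑' n : ℕ, y ^ n / n.factorial := by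
  rw [Real.exp_eq_exp_ℝ, NormedSpace.exp_eq_tsum_div]

/-- The generating function `P(z;x) = Σ_{n=1}^∞ P_n(x) z^n` of the
solution of the differential-equation system
`dP_1/dx = −(λ + ξ(x)) P_1(x)`,
`dP_n/dx = −(λ + ξ(x)) P_n(x) + λ P_{n−1}(x)` (`n ≥ 2`)
satisfies `P(z;x) = P(z;0) (1 − G(x)) exp(−λ(1−z)x)` for every `z ∈ [0,1)` and
`x ≥ 0`, provided `Σ_n P_n(0) z^n` converges absolutely for `z ∈ [0,1)`. -/
theorem generating_function_closed_form
    (lam : ℝ) (hlam : 0 < lam)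
    (g : ℝ → ℝ) (hgnonneg : ∀ x, 0 ≤ g x)
    (hgprob : ∫ x in Set.Ioi (0 : ℝ), g x = 1)
    (G : ℝ → ℝ) (hGdef : ∀ x, G x = ∫ u in Set.Ioc (0 : ℝ) x, g u)
    (hG' : ∀ x, HasDerivAt G (g x) x)
    (hGlt : ∀ x, 0 ≤ x → G x < 1)
    (xi : ℝ → ℝ) (hxi : ∀ x, xi x = g x / (1 - G x))
    (P : ℕ → ℝ → ℝ)
    (hPnonneg : ∀ n x, 0 ≤ x → 0 ≤ P n x)
    (hdiff : ∀ n, 1 ≤ n → Differentiable ℝ (P n))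
    (hode1 : ∀ x, 0 ≤ x → deriv (P 1) x = -(lam + xi x) * P 1 x)
    (hode : ∀ n, 2 ≤ n → ∀ x, 0 ≤ x →
      deriv (P n) x = -(lam + xi x) * P n x + lam * P (n - 1) x)
    (hconv : ∀ z ∈ Set.Ico (0 : ℝ) 1,
      Summable fun n : ℕ => |P (n + 1) 0| * z ^ (n + 1)) :
    ∀ z ∈ Set.Ico (0 : ℝ) 1, ∀ x, 0 ≤ x →
      (∑' n : ℕ, P (n + 1) x * z ^ (n + 1)) =
        (∑' n : ℕ, P (n + 1) 0 * z ^ (n + 1)) *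
          ((1 - G x) * Real.exp (-lam * (1 - z) * x)) := by
  -- G vanishes at nonpositive points
  have hG0 : ∀ x : ℝ, x ≤ 0 → G x = 0 := by
    intro x hx
    rw [hGdef, Set.Ioc_eq_empty (by simpa using hx.not_gt)]
    simp
  have hGlt' : ∀ x : ℝ, G x < 1 := by
    intro x
    rcases le_or_gt 0 x with h | h
    · exact hGlt x h
    · rw [hG0 x h.le]; norm_num
  have hGne : ∀ x : ℝ, 1 - G x ≠ 0 := fun x => by have := hGlt' x; linarith
  set E : ℝ → ℝ := fun x => (1 - G x) * Real.exp (-lam * x) with hEdef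
  have hEpos : ∀ x, 0 < E x := fun x =>
    mul_pos (by have := hGlt' x; linarith) (Real.exp_pos _)
  have hE0 : E 0 = 1 := by simp [hEdef, hG0 0 le_rfl]
  have hE : ∀ x, HasDerivAt E (-(lam + xi x) * E x) x := by
    intro x
    have h1 : HasDerivAt (fun y => 1 - G y) (-g x) x := (hG' x).const_sub 1
    have h2 : HasDerivAt (fun y => Real.exp (-lam * y))
        (Real.exp (-lam * x) * (-lam * 1)) x :=
      ((hasDerivAt_id x).const_mul (-lam)).exp
    have h3 := h1.mul h2
    refine h3.congr_deriv ?_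
    symm
    rw [hxi, hEdef]
    field_simp [hGne x]
    ring
  -- the polynomial part of the explicit solution
  set S : ℕ → ℝ → ℝ := fun n t =>
    ∑ k ∈ Finset.range (n + 1), P (n + 1 - k) 0 * (lam * t) ^ k / (Nat.factorial k)
    with hSdef
  have hGcont : Continuous G := by
    have hd : Differentiable ℝ G := fun y => (hG' y).differentiableAt
    exact hd.continuous
  have hEcont : Continuous E := by
    rw [hEdef]
    exact (continuous_const.sub hGcont).mul
      (Real.continuous_exp.comp (continuous_const.mul continuous_id))
  have hS0 : ∀ n, S n 0 = P (n + 1) 0 := by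
    intro n
    show (∑ k ∈ Finset.range (n + 1),
      P (n + 1 - k) 0 * (lam * (0:ℝ)) ^ k / (Nat.factorial k)) = P (n + 1) 0
    rw [Finset.sum_eq_single 0]
    · simp
    · intro k _ hk0; simp [mul_zero, zero_pow hk0]
    · simp
  have hScont : ∀ n, Continuous (S n) := by
    intro n
    apply continuous_finset_sum
    intro k _
    fun_prop
  have hSderiv : ∀ n t, HasDerivAt (S (n + 1)) (lam * S n t) t := by
    intro n t
    have hrepr : S (n + 1) = fun t =>
        (∑ k ∈ Finset.range (n + 1),
          P (n + 1 - k) 0 * (lam * t) ^ (k + 1) / (Nat.factorial (k + 1)))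
          + P (n + 2) 0 := by
      funext u
      show (∑ k ∈ Finset.range (n + 2),
        P (n + 2 - k) 0 * (lam * u) ^ k / (Nat.factorial k)) = _
      rw [Finset.sum_range_succ'
        (fun k => P (n + 2 - k) 0 * (lam * u) ^ k / (Nat.factorial k)) (n + 1)]
      simp [Nat.succ_sub_succ]
    have hterm : ∀ k : ℕ, HasDerivAt
        (fun u : ℝ => P (n + 1 - k) 0 * (lam * u) ^ (k + 1) / (Nat.factorial (k + 1)))
        (lam * (P (n + 1 - k) 0 * (lam * t) ^ k / (Nat.factorial k))) t := by
      intro k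
      have hp : HasDerivAt (fun u : ℝ => (lam * u) ^ (k + 1))
          ((k + 1 : ℕ) * (lam * t) ^ (k + 1 - 1) * (lam * 1)) t :=
        ((hasDerivAt_id t).const_mul lam).pow (k + 1)
      have h := (hp.const_mul (P (n + 1 - k) 0)).div_const (Nat.factorial (k + 1))
      refine h.congr_deriv ?_
      symm
      simp only [Nat.add_sub_cancel, Nat.factorial_succ]
      have hkf : (Nat.factorial k : ℝ) ≠ 0 := by positivity
      push_cast
      field_simp
    have hsum := HasDerivAt.fun_sum (fun k (_ : k ∈ Finset.range (n + 1)) => hterm k)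
    have h := hsum.add_const (P (n + 2) 0)
    rw [hrepr]
    refine h.congr_deriv ?_
    symm
    simp [hSdef, Finset.mul_sum]
  -- explicit solution of the ODE system
  have key : ∀ n, ∀ x : ℝ, 0 ≤ x → P (n + 1) x = E x * S n x := by
    intro n
    induction n with
    | zero =>
      intro x hx
      set f : ℝ → ℝ := fun t => P 1 t / E t with hfdef
      have hder : ∀ t ∈ Set.Ico (0 : ℝ) x, HasDerivWithinAt f 0 (Set.Ici t) t := by
        intro t ht
        have ht0 : 0 ≤ t := ht.1
        have hP : HasDerivAt (P 1) (-(lam + xi t) * P 1 t) t := by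
          have := ((hdiff 1 le_rfl) t).hasDerivAt
          rwa [hode1 t ht0] at this
        have h := hP.div (hE t) (hEpos t).ne'
        have : HasDerivAt f 0 t := by
          refine h.congr_deriv ?_
          symm
          field_simp
          ring
        exact this.hasDerivWithinAt
      have hcont : ContinuousOn f (Set.Icc 0 x) := by
        apply Continuous.continuousOn
        exact ((hdiff 1 le_rfl).continuous).div hEcont fun t => (hEpos t).ne'
      have := constant_of_has_deriv_right_zero hcont hder x (Set.mem_Icc.2 ⟨hx, le_rfl⟩)
      have hf0 : f 0 = P 1 0 := by rw [hfdef]; simp [hE0]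
      have hS : S 0 x = P 1 0 := by
        show (∑ k ∈ Finset.range 1,
          P (1 - k) 0 * (lam * x) ^ k / (Nat.factorial k)) = P 1 0
        simp
      rw [hS]
      have hfx : P 1 x / E x = P 1 0 := by rw [← hf0]; exact this
      rw [div_eq_iff (hEpos x).ne'] at hfx
      linarith [hfx]
    | succ n ih =>
      intro x hx
      set f : ℝ → ℝ := fun t => P (n + 2) t / E t - S (n + 1) t with hfdef
      have hder : ∀ t ∈ Set.Ico (0 : ℝ) x, HasDerivWithinAt f 0 (Set.Ici t) t := by
        intro t ht
        have ht0 : 0 ≤ t := ht.1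
        have hP : HasDerivAt (P (n + 2))
            (-(lam + xi t) * P (n + 2) t + lam * P (n + 1) t) t := by
          have := ((hdiff (n + 2) (by omega)) t).hasDerivAt
          have hod := hode (n + 2) (by omega) t ht0
          simp only [show n + 2 - 1 = n + 1 by omega] at hod
          rwa [hod] at this
        have hq := hP.div (hE t) (hEpos t).ne'
        have hq' : HasDerivAt (fun u => P (n + 2) u / E u) (lam * S n t) t := by
          refine hq.congr_deriv ?_
          symm
          rw [eq_div_iff (pow_ne_zero 2 (hEpos t).ne'), ih t ht0]
          ring
        have : HasDerivAt f 0 t := by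
          have := hq'.sub (hSderiv n t)
          simp at this
          exact this
        exact this.hasDerivWithinAt
      have hcont : ContinuousOn f (Set.Icc 0 x) := by
        apply Continuous.continuousOn
        apply Continuous.sub
        · exact ((hdiff (n + 2) (by omega)).continuous).div hEcont
            fun t => (hEpos t).ne'
        · exact hScont (n + 1)
      have hc := constant_of_has_deriv_right_zero hcont hder x (Set.mem_Icc.2 ⟨hx, le_rfl⟩)
      have hf0 : f 0 = 0 := by
        rw [hfdef]; simp [hE0, hS0]
      rw [hf0] at hc
      have hfx : P (n + 2) x / E x - S (n + 1) x = 0 := hc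
      rw [sub_eq_zero, div_eq_iff (hEpos x).ne'] at hfx
      linarith [hfx]
  -- assemble the generating function
  intro z hz x hx
  obtain ⟨hz0, hz1⟩ := hz
  set a : ℕ → ℝ := fun n => P (n + 1) 0 * z ^ (n + 1) with hadef
  set b : ℕ → ℝ := fun k => (lam * z * x) ^ k / (Nat.factorial k) with hbdef
  have hsa : Summable fun n => ‖a n‖ := by
    have := hconv z ⟨hz0, hz1⟩
    apply this.congr
    intro n
    rw [hadef]
    rw [Real.norm_eq_abs, abs_mul, abs_pow, abs_of_nonneg hz0]
  have hsb : Summable fun k => ‖b k‖ := by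
    apply (Real.summable_pow_div_factorial |lam * z * x|).congr
    intro k
    rw [hbdef, Real.norm_eq_abs, abs_div, abs_pow, Nat.abs_cast]
  have hcauchy := tsum_mul_tsum_eq_tsum_sum_range_of_summable_norm hsa hsb
  have hbsum : (∑' k, b k) = Real.exp (lam * z * x) := by
    rw [real_exp_eq_tsum]
  have hsum_eq : ∀ n : ℕ,
      (∑ k ∈ Finset.range (n + 1), a k * b (n - k)) = S n x * z ^ (n + 1) := by
    intro n
    have h1 : (∑ k ∈ Finset.range (n + 1), a k * b (n - k))
        = ∑ k ∈ Finset.range (n + 1), a (n - k) * b (n - (n - k)) := by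
      exact (Finset.sum_range_reflect (fun k => a k * b (n - k)) (n + 1)).symm
    rw [h1, hSdef, Finset.sum_mul]
    apply Finset.sum_congr rfl
    intro k hk
    have hkn : k ≤ n := Nat.lt_succ_iff.mp (Finset.mem_range.mp hk)
    have h2 : n - (n - k) = k := by omega
    rw [h2, hadef, hbdef]
    simp only
    have h3 : n - k + 1 = n + 1 - k := by omega
    rw [h3]
    have h4 : z ^ (n + 1 - k) * ((lam * z * x) ^ k) = (lam * x) ^ k * z ^ (n + 1) := by
      rw [mul_pow, mul_pow]
      rw [show z ^ (n + 1 - k) * ((lam ^ k * z ^ k) * x ^ k)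
          = (lam ^ k * x ^ k) * (z ^ (n + 1 - k) * z ^ k) by ring]
      rw [← pow_add]
      rw [show n + 1 - k + k = n + 1 by omega]
      ring
    calc P (n + 1 - k) 0 * z ^ (n + 1 - k) * ((lam * z * x) ^ k / (Nat.factorial k))
        = P (n + 1 - k) 0 * (z ^ (n + 1 - k) * (lam * z * x) ^ k) / (Nat.factorial k) := by
          ring
      _ = P (n + 1 - k) 0 * ((lam * x) ^ k * z ^ (n + 1)) / (Nat.factorial k) := by rw [h4]
      _ = P (n + 1 - k) 0 * (lam * x) ^ k / (Nat.factorial k) * z ^ (n + 1) := by ring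
  have hLHS : (∑' n : ℕ, P (n + 1) x * z ^ (n + 1))
      = E x * ∑' n : ℕ, S n x * z ^ (n + 1) := by
    rw [← tsum_mul_left]
    apply tsum_congr
    intro n
    rw [key n x hx]
    ring
  rw [hLHS]
  have hr : (∑' n : ℕ, S n x * z ^ (n + 1))
      = (∑' n : ℕ, P (n + 1) 0 * z ^ (n + 1)) * Real.exp (lam * z * x) := by
    rw [← hbsum, hcauchy]
    exact tsum_congr fun n => (hsum_eq n).symm
  rw [hr, hEdef]
  rw [show -lam * (1 - z) * x = -lam * x + lam * z * x by ring, Real.exp_add]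
  ring
end

section
/- Let P_n(x) = (1 − G(x)) e^{−λx} Σ_{k=1}^n P_k(0) (λx)^{n−k}/(n−k)! for n ≥ 1 with Σ P_n(0) z^n absolutely convergent on [0,1), set α_m := ∫_0^∞ P_m(x) ξ(x) dx for m ≥ 1, and suppose the boundary conditions P_n(0) = α_{n+b} for n ≥ 2, P_1(0) = α_{1+b} + λ P_0, and λ P_0 = Σ_{k=1}^b α_k hold, where P_0 ≥ 0. Then for every z ∈ (0,1), ( Σ_{n=1}^∞ P_n(0) z^n ) · ( z^b − G*(λ − λz) ) = Σ_{k=1}^b ( z^{b+1} − z^k ) α_k, where G*(s) := ∫_0^∞ e^{−sx} g(x) dx. -/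
open Finset MeasureTheory

private lemma aux_pow_div_fact_le_one {t : ℝ} (ht : 0 ≤ t) (j : ℕ) :
    Real.exp (-t) * t ^ j / (Nat.factorial j) ≤ 1 := by
  have h1 : t ^ j / (Nat.factorial j : ℝ) ≤ Real.exp t := by
    calc t ^ j / (Nat.factorial j : ℝ)
        ≤ ∑ i ∈ Finset.range (j + 1), t ^ i / (Nat.factorial i : ℝ) := by
          refine Finset.single_le_sum (f := fun i => t ^ i / (Nat.factorial i : ℝ)) ?_ ?_
          · intro i _; positivity
          · simp
      _ ≤ Real.exp t := Real.sum_le_exp_of_nonneg ht _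
  have h2 : Real.exp (-t) * t ^ j / (Nat.factorial j) =
      Real.exp (-t) * (t ^ j / (Nat.factorial j)) := by ring
  rw [h2]
  calc Real.exp (-t) * (t ^ j / (Nat.factorial j))
      ≤ Real.exp (-t) * Real.exp t :=
        mul_le_mul_of_nonneg_left h1 (Real.exp_nonneg _)
    _ = 1 := by rw [← Real.exp_add]; simp

private lemma aux_exp_tsum (t : ℝ) :
    ∑' j : ℕ, t ^ j / (Nat.factorial j : ℝ) = Real.exp t := by
  rw [Real.exp_eq_exp_ℝ, NormedSpace.exp_eq_tsum_div]

set_option maxHeartbeats 1000000 in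
theorem boundary_generating_function_equation
    (lam : ℝ) (hlam : 0 < lam)
    (b : ℕ) (hb : 0 < b)
    (g : ℝ → ℝ) (hgnonneg : ∀ x, 0 ≤ g x)
    (hgprob : ∫ x in Set.Ioi (0 : ℝ), g x = 1)
    (G : ℝ → ℝ) (hGdef : ∀ x, G x = ∫ u in Set.Ioc (0 : ℝ) x, g u)
    (hGlt : ∀ x, 0 ≤ x → G x < 1)
    (xi : ℝ → ℝ) (hxi : ∀ x, xi x = g x / (1 - G x))
    (Gstar : ℝ → ℝ)
    (hGstar : ∀ s, Gstar s = ∫ x in Set.Ioi (0 : ℝ), Real.exp (-s * x) * g x)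
    (P : ℕ → ℝ → ℝ)
    (hP0nonneg : ∀ n, 1 ≤ n → 0 ≤ P n 0)
    (hPform : ∀ n, 1 ≤ n → ∀ x, 0 ≤ x →
      P n x = (1 - G x) * Real.exp (-lam * x) *
        ∑ k ∈ Finset.Icc 1 n, P k 0 * (lam * x) ^ (n - k) / (Nat.factorial (n - k)))
    (hconv : ∀ z ∈ Set.Ico (0 : ℝ) 1,
      Summable fun n : ℕ => |P (n + 1) 0| * z ^ (n + 1))
    (alpha : ℕ → ℝ)
    (halpha : ∀ m, 1 ≤ m → alpha m = ∫ x in Set.Ioi (0 : ℝ), P m x * xi x)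
    (hint : ∀ m, 1 ≤ m → IntegrableOn (fun x => P m x * xi x) (Set.Ioi (0 : ℝ)))
    (P0 : ℝ) (hP0 : 0 ≤ P0)
    (hbc1 : ∀ n, 2 ≤ n → P n 0 = alpha (n + b))
    (hbc2 : P 1 0 = alpha (1 + b) + lam * P0)
    (hbal : lam * P0 = ∑ k ∈ Finset.Icc 1 b, alpha k) :
    ∀ z ∈ Set.Ioo (0 : ℝ) 1,
      (∑' n : ℕ, P (n + 1) 0 * z ^ (n + 1)) * (z ^ b - Gstar (lam - lam * z)) =
        ∑ k ∈ Finset.Icc 1 b, (z ^ (b + 1) - z ^ k) * alpha k := by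
  intro z hz
  obtain ⟨hz0, hz1⟩ := hz
  -- g is integrable on (0, ∞)
  have hg_int : IntegrableOn g (Set.Ioi (0 : ℝ)) := by
    by_contra hcon
    rw [MeasureTheory.integral_undef hcon] at hgprob
    exact one_ne_zero hgprob.symm
  have hg_meas := hg_int.aestronglyMeasurable
  -- the kernel h j
  set h : ℕ → ℝ → ℝ :=
    fun j x => Real.exp (-lam * x) * (lam * x) ^ j / (Nat.factorial j) * g x with hhdef
  have hh_nonneg : ∀ j, ∀ x : ℝ, 0 ≤ x → 0 ≤ h j x := by
    intro j x hx
    simp only [hhdef]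
    have h1 : (0:ℝ) ≤ lam * x := by positivity
    have h2 := hgnonneg x
    positivity
  have hh_le : ∀ j, ∀ x : ℝ, 0 ≤ x → h j x ≤ g x := by
    intro j x hx
    simp only [hhdef]
    have key : Real.exp (-lam * x) * (lam * x) ^ j / (Nat.factorial j) ≤ 1 := by
      have := aux_pow_div_fact_le_one (t := lam * x) (by positivity) j
      rwa [show -(lam * x) = -lam * x by ring] at this
    exact mul_le_of_le_one_left (hgnonneg x) key
  have hh_meas : ∀ j, AEStronglyMeasurable (h j) (volume.restrict (Set.Ioi (0:ℝ))) := by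
    intro j
    simp only [hhdef]
    apply AEStronglyMeasurable.mul _ hg_meas
    apply Continuous.aestronglyMeasurable
    exact ((Real.continuous_exp.comp (continuous_const.mul continuous_id)).mul
      ((continuous_const.mul continuous_id).pow j)).div_const _
  have hh_int : ∀ j, IntegrableOn (h j) (Set.Ioi (0 : ℝ)) := by
    intro j
    refine Integrable.mono' hg_int (hh_meas j) ?_
    filter_upwards [ae_restrict_mem measurableSet_Ioi] with x hx
    rw [Real.norm_eq_abs, abs_of_nonneg (hh_nonneg j x (le_of_lt hx))]
    exact hh_le j x (le_of_lt hx)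
  set I : ℕ → ℝ := fun j => ∫ x in Set.Ioi (0:ℝ), h j x with hIdef
  have hI_nonneg : ∀ j, 0 ≤ I j := by
    intro j
    simp only [hIdef]
    exact setIntegral_nonneg measurableSet_Ioi fun x hx => hh_nonneg j x (le_of_lt hx)
  have hI_le : ∀ j, I j ≤ 1 := by
    intro j
    simp only [hIdef]
    calc (∫ x in Set.Ioi (0:ℝ), h j x) ≤ ∫ x in Set.Ioi (0:ℝ), g x :=
          setIntegral_mono_on (hh_int j) hg_int measurableSet_Ioi
            fun x hx => hh_le j x (le_of_lt hx)
      _ = 1 := hgprob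
  -- alpha in terms of I
  have halphaI : ∀ m, 1 ≤ m → alpha m = ∑ k ∈ Finset.Icc 1 m, P k 0 * I (m - k) := by
    intro m hm
    rw [halpha m hm]
    have hcongr : Set.EqOn (fun x => P m x * xi x)
        (fun x => ∑ k ∈ Finset.Icc 1 m, P k 0 * h (m - k) x) (Set.Ioi (0:ℝ)) := by
      intro x hx
      have hx0 : (0:ℝ) < x := hx
      have hG : (1:ℝ) - G x ≠ 0 := by
        have := hGlt x hx0.le
        intro hc; rw [sub_eq_zero] at hc; exact absurd hc.symm (ne_of_lt this)
      simp only [hhdef]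
      rw [hPform m hm x hx0.le, hxi x]
      rw [Finset.mul_sum, Finset.sum_mul]
      apply Finset.sum_congr rfl
      intro k _
      have hfac : ((Nat.factorial (m - k)) : ℝ) ≠ 0 :=
        Nat.cast_ne_zero.mpr (Nat.factorial_ne_zero _)
      field_simp
    rw [setIntegral_congr_fun measurableSet_Ioi hcongr]
    rw [integral_finset_sum _ fun k _ => (hh_int (m - k)).const_mul (P k 0)]
    simp only [hIdef]
    exact Finset.sum_congr rfl fun k _ => MeasureTheory.integral_const_mul _ _
  -- the sequences
  set Q : ℕ → ℝ := fun n => P (n + 1) 0 * z ^ (n + 1) with hQdef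
  set J : ℕ → ℝ := fun j => I j * z ^ j with hJdef
  have hQ_nonneg : ∀ n, 0 ≤ Q n := by
    intro n
    simp only [hQdef]
    exact mul_nonneg (hP0nonneg (n+1) (by omega)) (by positivity)
  have hJ_nonneg : ∀ j, 0 ≤ J j := by
    intro j
    simp only [hJdef]
    exact mul_nonneg (hI_nonneg j) (by positivity)
  have hQsum : Summable Q := by
    refine (hconv z ⟨hz0.le, hz1⟩).congr fun n => ?_
    simp only [hQdef]
    rw [abs_of_nonneg (hP0nonneg (n+1) (by omega))]
  have hQnorm : Summable fun n => ‖Q n‖ := by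
    refine hQsum.congr fun n => ?_
    rw [Real.norm_eq_abs, abs_of_nonneg (hQ_nonneg n)]
  have hJsum : Summable J := by
    refine Summable.of_nonneg_of_le hJ_nonneg (fun j => ?_)
      (summable_geometric_of_lt_one hz0.le hz1)
    simp only [hJdef]
    calc I j * z ^ j ≤ 1 * z ^ j :=
          mul_le_mul_of_nonneg_right (hI_le j) (by positivity)
      _ = z ^ j := one_mul _
  have hJnorm : Summable fun j => ‖J j‖ := by
    refine hJsum.congr fun j => ?_
    rw [Real.norm_eq_abs, abs_of_nonneg (hJ_nonneg j)]
  -- Gstar as a power series in z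
  have hGstar_eq : Gstar (lam - lam * z) = ∑' j : ℕ, J j := by
    rw [hGstar]
    set F : ℕ → ℝ → ℝ := fun j x => h j x * z ^ j with hFdef
    have hF_int : ∀ j, Integrable (F j) (volume.restrict (Set.Ioi (0:ℝ))) := by
      intro j
      simp only [hFdef]
      exact (hh_int j).mul_const _
    have hF_intval : ∀ j, (∫ x in Set.Ioi (0:ℝ), F j x) = J j := by
      intro j
      simp only [hFdef, hJdef, hIdef]
      rw [MeasureTheory.integral_mul_const]
    have hF_normint : ∀ j, (∫ x in Set.Ioi (0:ℝ), ‖F j x‖) = J j := by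
      intro j
      rw [← hF_intval j]
      apply setIntegral_congr_fun measurableSet_Ioi
      intro x hx
      simp only
      rw [Real.norm_eq_abs, abs_of_nonneg]
      simp only [hFdef]
      exact mul_nonneg (hh_nonneg j x (le_of_lt hx)) (by positivity)
    have hF_sum : Summable fun j => ∫ x in Set.Ioi (0:ℝ), ‖F j x‖ :=
      hJsum.congr fun j => (hF_normint j).symm
    have key := MeasureTheory.integral_tsum_of_summable_integral_norm hF_int hF_sum
    have hFtsum : ∀ x : ℝ, (∑' j : ℕ, F j x) = Real.exp (-(lam - lam * z) * x) * g x := by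
      intro x
      have hterm : ∀ j : ℕ, F j x =
          (lam * x * z) ^ j / (Nat.factorial j) * (Real.exp (-lam * x) * g x) := by
        intro j
        simp only [hFdef, hhdef, mul_pow]
        ring
      rw [tsum_congr hterm, tsum_mul_right, aux_exp_tsum]
      rw [← mul_assoc, ← Real.exp_add]
      have : lam * x * z + -lam * x = -(lam - lam * z) * x := by ring
      rw [this]
    have h1 : (∫ x in Set.Ioi (0:ℝ), Real.exp (-(lam - lam * z) * x) * g x)
        = ∫ x in Set.Ioi (0:ℝ), ∑' j, F j x :=
      setIntegral_congr_fun measurableSet_Ioi fun x _ => (hFtsum x).symm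
    rw [h1, ← key]
    exact tsum_congr fun j => hF_intval j
  -- Cauchy product
  have hcauchy : (∑' n, Q n) * (∑' j, J j) =
      ∑' n, ∑ k ∈ Finset.range (n + 1), Q k * J (n - k) :=
    tsum_mul_tsum_eq_tsum_sum_range_of_summable_norm hQnorm hJnorm
  have hterm_eq : ∀ n : ℕ, (∑ k ∈ Finset.range (n + 1), Q k * J (n - k))
      = alpha (n + 1) * z ^ (n + 1) := by
    intro n
    rw [halphaI (n + 1) (by omega), ← Finset.Ico_add_one_right_eq_Icc, Finset.sum_Ico_eq_sum_range]
    simp only [Nat.add_sub_cancel]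
    rw [Finset.sum_mul]
    apply Finset.sum_congr rfl
    intro k hk
    have hk' : k ≤ n := by
      have := Finset.mem_range.mp hk; omega
    simp only [hQdef, hJdef]
    have e1 : 1 + k = k + 1 := by omega
    have e2 : n + 1 - (k + 1) = n - k := by omega
    rw [e1, e2]
    have e3 : z ^ (n + 1) = z ^ (k + 1) * z ^ (n - k) := by
      rw [← pow_add]; congr 1; omega
    rw [e3]; ring
  have hA_sum : Summable fun n => alpha (n + 1) * z ^ (n + 1) :=
    ((summable_norm_sum_mul_range_of_summable_norm hQnorm hJnorm).of_norm).congr hterm_eq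
  have hSG : (∑' n, Q n) * Gstar (lam - lam * z) = ∑' n, alpha (n + 1) * z ^ (n + 1) := by
    rw [hGstar_eq, hcauchy]
    exact tsum_congr hterm_eq
  -- split off first b terms
  have hsplit := Summable.sum_add_tsum_nat_add (f := fun n => alpha (n + 1) * z ^ (n + 1)) b hA_sum
  have hC : (∑ i ∈ Finset.range b, alpha (i + 1) * z ^ (i + 1))
      = ∑ k ∈ Finset.Icc 1 b, alpha k * z ^ k := by
    rw [← Finset.Ico_add_one_right_eq_Icc, Finset.sum_Ico_eq_sum_range]
    simp only [Nat.add_sub_cancel]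
    apply Finset.sum_congr rfl
    intro i _
    rw [Nat.add_comm 1 i]
  have hA_eq : (∑' n, alpha (n + 1) * z ^ (n + 1)) =
      (∑ k ∈ Finset.Icc 1 b, alpha k * z ^ k)
        + ∑' n : ℕ, alpha (n + b + 1) * z ^ (n + b + 1) := by
    rw [← hsplit, hC]
  -- z^b * S
  have hf2sum : Summable (fun n : ℕ => alpha (n + b + 1) * z ^ (n + b + 1)) :=
    (summable_nat_add_iff b).mpr hA_sum
  have hd_sum : Summable (fun n : ℕ => if n = 0 then lam * P0 * z ^ (b + 1) else 0) := by
    apply summable_of_ne_finset_zero (s := ({0} : Finset ℕ))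
    intro n hn
    simp only [Finset.mem_singleton] at hn
    simp [hn]
  have hQb : ∀ n : ℕ, Q n * z ^ b =
      alpha (n + b + 1) * z ^ (n + b + 1)
        + (if n = 0 then lam * P0 * z ^ (b + 1) else 0) := by
    intro n
    simp only [hQdef]
    rcases Nat.eq_zero_or_pos n with hn | hn
    · subst hn
      simp only [Nat.zero_add, reduceIte]
      rw [hbc2, show 1 + b = b + 1 by omega]
      ring
    · rw [if_neg (by omega), hbc1 (n + 1) (by omega)]
      rw [show n + 1 + b = n + b + 1 by omega]
      ring
  have hSzb : (∑' n, Q n) * z ^ b =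
      (∑' n : ℕ, alpha (n + b + 1) * z ^ (n + b + 1)) + lam * P0 * z ^ (b + 1) := by
    rw [← tsum_mul_right, tsum_congr hQb, Summable.tsum_add hf2sum hd_sum, tsum_ite_eq]
  -- assemble
  have hrhs : (∑ k ∈ Finset.Icc 1 b, (z ^ (b + 1) - z ^ k) * alpha k)
      = lam * P0 * z ^ (b + 1) - ∑ k ∈ Finset.Icc 1 b, alpha k * z ^ k := by
    rw [hbal, Finset.sum_mul, ← Finset.sum_sub_distrib]
    apply Finset.sum_congr rfl
    intro k _
    ring
  rw [mul_sub, hSzb, hSG, hA_eq, hrhs]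
  ring
end

section
/- Let g be a probability density on [0,∞) with mean E[S] = ∫_0^∞ x g(x) dx > 0 and with ∫_0^∞ e^{δλx} g(x) dx < ∞ for some δ > 0, let λ > 0, let b be a positive integer with λ E[S] < b, and define G*(s) = ∫_0^∞ e^{−sx} g(x) dx for complex s with Re(s) > −δλ. Then there exists ε ∈ (0, δ) such that for every complex z with |z| = 1 + ε, |G*(λ − λz)| < |z|^b. -/
open MeasureTheory
open Filter

/-- Rouché-type inequality. If `g` is a probability density on
`[0,∞)` with mean `E[S] > 0` and finite exponential moment
`∫_0^∞ e^{δλx} g(x) dx < ∞` for some `δ > 0`, `λ > 0`, `b` a positive integer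
with `λE[S] < b`, and `G*(s) = ∫_0^∞ e^{−sx} g(x) dx`, then there is
`ε ∈ (0, δ)` such that `|G*(λ − λz)| < |z|^b` for every complex `z` with
`|z| = 1 + ε`. -/
theorem rouche_inequality_on_circle
    (g : ℝ → ℝ) (hgmeas : Measurable g) (hgnonneg : ∀ x, 0 ≤ g x)
    (hgprob : ∫ x in Set.Ioi (0 : ℝ), g x = 1)
    (ES : ℝ) (hES : ES = ∫ x in Set.Ioi (0 : ℝ), x * g x) (hESpos : 0 < ES)
    (hESint : IntegrableOn (fun x => x * g x) (Set.Ioi (0 : ℝ)))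
    (lam : ℝ) (hlam : 0 < lam)
    (delta : ℝ) (hdelta : 0 < delta)
    (hexp : IntegrableOn (fun x => Real.exp (delta * lam * x) * g x)
      (Set.Ioi (0 : ℝ)))
    (b : ℕ) (hb : 0 < b) (hstab : lam * ES < b)
    (Gstar : ℂ → ℂ)
    (hGstar : ∀ s : ℂ, Gstar s =
      ∫ x in Set.Ioi (0 : ℝ), Complex.exp (-s * (x : ℂ)) * (g x : ℂ)) :
    ∃ ε ∈ Set.Ioo (0 : ℝ) delta, ∀ z : ℂ, ‖z‖ = 1 + ε →
      ‖Gstar (lam - lam * z)‖ < ‖z‖ ^ b := by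
  set μ := volume.restrict (Set.Ioi (0 : ℝ)) with hμ
  set F : ℝ → ℝ → ℝ := fun ε x => x * Real.exp (lam * ε * x) * g x with hF
  set C : ℝ := 2 / (delta * lam) with hC
  have hdl : 0 < delta * lam := mul_pos hdelta hlam
  have hCpos : 0 < C := by positivity
  -- domination: for ε ∈ Ioo 0 (delta/2) and x > 0, x * exp(lam ε x) ≤ C * exp(delta lam x)
  have hdom : ∀ ε ∈ Set.Ioo (0:ℝ) (delta/2), ∀ x ∈ Set.Ioi (0:ℝ),
      x * Real.exp (lam * ε * x) ≤ C * Real.exp (delta * lam * x) := by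
    intro ε hε x hx
    have hx0 : (0:ℝ) < x := hx
    have h1 := Real.add_one_le_exp (delta * lam / 2 * x)
    have hx2 : x ≤ C * Real.exp (delta * lam / 2 * x) := by
      rw [hC, div_mul_eq_mul_div, le_div_iff₀ hdl]
      nlinarith
    calc x * Real.exp (lam * ε * x)
        ≤ (C * Real.exp (delta * lam / 2 * x)) * Real.exp (lam * ε * x) := by
          apply mul_le_mul_of_nonneg_right hx2 (Real.exp_pos _).le
      _ = C * Real.exp (delta * lam / 2 * x + lam * ε * x) := by
          rw [Real.exp_add]; ring
      _ ≤ C * Real.exp (delta * lam * x) := by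
          apply mul_le_mul_of_nonneg_left _ hCpos.le
          apply Real.exp_le_exp.mpr
          nlinarith [mul_nonneg (mul_nonneg (by linarith [hε.2] : (0:ℝ) ≤ delta/2 - ε) hlam.le) hx0.le]
  have hFmeas : ∀ ε : ℝ, AEStronglyMeasurable (F ε) μ := by
    intro ε
    apply Measurable.aestronglyMeasurable
    fun_prop
  -- integrability of the bound
  have hbound_int : Integrable (fun x => C * (Real.exp (delta * lam * x) * g x)) μ :=
    hexp.const_mul C
  -- pointwise limit
  have hlim : ∀ᵐ x ∂μ, Tendsto (fun ε => F ε x) (nhdsWithin 0 (Set.Ioi 0)) (nhds (x * g x)) := by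
    refine Filter.Eventually.of_forall (fun x => ?_)
    have : Tendsto (fun ε : ℝ => F ε x) (nhds 0) (nhds (x * Real.exp (lam * 0 * x) * g x)) := by
      apply Tendsto.mul (Tendsto.mul tendsto_const_nhds _) tendsto_const_nhds
      exact (Real.continuous_exp.comp (by fun_prop : Continuous fun ε : ℝ => lam * ε * x)).tendsto 0
    simpa using this.mono_left nhdsWithin_le_nhds
  have haeb : ∀ ε ∈ Set.Ioo (0:ℝ) (delta/2), ∀ᵐ x ∂μ, ‖F ε x‖ ≤
      C * (Real.exp (delta * lam * x) * g x) := by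
    intro ε hε
    refine ae_restrict_of_forall_mem measurableSet_Ioi (fun x hx => ?_)
    have hx0 : (0:ℝ) < x := hx
    have hnn : 0 ≤ F ε x := by
      apply mul_nonneg (mul_nonneg hx0.le (Real.exp_pos _).le) (hgnonneg x)
    rw [Real.norm_eq_abs, abs_of_nonneg hnn]
    have := hdom ε hε x hx
    have hg := hgnonneg x
    calc x * Real.exp (lam * ε * x) * g x
        ≤ (C * Real.exp (delta * lam * x)) * g x := mul_le_mul_of_nonneg_right this hg
      _ = C * (Real.exp (delta * lam * x) * g x) := by ring
  have hevb : ∀ᶠ ε in nhdsWithin (0:ℝ) (Set.Ioi 0), ∀ᵐ x ∂μ, ‖F ε x‖ ≤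
      C * (Real.exp (delta * lam * x) * g x) := by
    filter_upwards [Ioo_mem_nhdsGT_of_mem (show (0:ℝ) ∈ Set.Ico 0 (delta/2) from Set.left_mem_Ico.mpr (by linarith))] with ε hε
    exact haeb ε hε
  have hψ : Tendsto (fun ε => ∫ x, F ε x ∂μ) (nhdsWithin (0:ℝ) (Set.Ioi 0)) (nhds ES) := by
    rw [hES]
    exact tendsto_integral_filter_of_dominated_convergence _
      (Filter.Eventually.of_forall hFmeas) hevb hbound_int hlim
  -- choose ε
  have hev1 : ∀ᶠ ε in nhdsWithin (0:ℝ) (Set.Ioi 0),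
      lam * (∫ x, F ε x ∂μ) < b := by
    have := (hψ.const_mul lam).eventually_lt_const hstab
    exact this
  have hev2 : ∀ᶠ ε in nhdsWithin (0:ℝ) (Set.Ioi 0), ε ∈ Set.Ioo (0:ℝ) (delta/2) :=
    Ioo_mem_nhdsGT_of_mem (show (0:ℝ) ∈ Set.Ico 0 (delta/2) from Set.left_mem_Ico.mpr (by linarith))
  obtain ⟨ε, hεlt, hεm⟩ := (hev1.and hev2).exists
  have hε0 : 0 < ε := hεm.1
  have hεδ : ε < delta := by linarith [hεm.2]
  refine ⟨ε, ⟨hε0, hεδ⟩, fun z hz => ?_⟩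
  -- integrabilities at this ε
  have hFint : Integrable (F ε) μ :=
    Integrable.mono hbound_int (hFmeas ε) (by
      filter_upwards [haeb ε hεm] with x hx
      refine hx.trans (le_abs_self _))
  have hgint : Integrable g μ := by
    refine Integrable.mono hexp hgmeas.aestronglyMeasurable ?_
    refine ae_restrict_of_forall_mem measurableSet_Ioi (fun x hx => ?_)
    have hx0 : (0:ℝ) < x := hx
    have h1 : (1:ℝ) ≤ Real.exp (delta * lam * x) := by
      rw [Real.one_le_exp_iff]
      exact mul_nonneg (mul_nonneg hdelta.le hlam.le) hx0.le
    rw [Real.norm_eq_abs, Real.norm_eq_abs, abs_of_nonneg (hgnonneg x),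
      abs_of_nonneg (mul_nonneg (Real.exp_pos _).le (hgnonneg x))]
    nlinarith [hgnonneg x]
  have hEint : Integrable (fun x => Real.exp (lam * ε * x) * g x) μ := by
    refine Integrable.mono hexp (by apply Measurable.aestronglyMeasurable; fun_prop) ?_
    refine ae_restrict_of_forall_mem measurableSet_Ioi (fun x hx => ?_)
    have hx0 : (0:ℝ) < x := hx
    rw [Real.norm_eq_abs, Real.norm_eq_abs,
      abs_of_nonneg (mul_nonneg (Real.exp_pos _).le (hgnonneg x)),
      abs_of_nonneg (mul_nonneg (Real.exp_pos _).le (hgnonneg x))]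
    refine mul_le_mul_of_nonneg_right (Real.exp_le_exp.mpr ?_) (hgnonneg x)
    nlinarith [mul_nonneg (mul_nonneg (by linarith [hεm.2] : (0:ℝ) ≤ delta - ε) hlam.le) hx0.le]
  set ψ : ℝ := ∫ x, F ε x ∂μ with hψdef
  -- step 1: |Gstar| ≤ ∫ exp(lam ε x) g x
  have hstep1 : ‖Gstar (lam - lam * z)‖ ≤
      ∫ x, Real.exp (lam * ε * x) * g x ∂μ := by
    rw [hGstar]
    refine le_trans (norm_integral_le_integral_norm _) ?_
    refine integral_mono_of_nonneg (Filter.Eventually.of_forall (fun x => norm_nonneg _))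
      hEint ?_
    refine ae_restrict_of_forall_mem measurableSet_Ioi (fun x hx => ?_)
    have hx0 : (0:ℝ) < x := hx
    have hre : (-(↑lam - ↑lam * z) * (↑x : ℂ)).re = (lam * z.re - lam) * x := by
      simp [Complex.mul_re, Complex.sub_re, Complex.sub_im]
    dsimp only
    rw [norm_mul, Complex.norm_exp, hre, Complex.norm_real,
      Real.norm_eq_abs, abs_of_nonneg (hgnonneg x)]
    refine mul_le_mul_of_nonneg_right (Real.exp_le_exp.mpr ?_) (hgnonneg x)
    have hzr : z.re ≤ 1 + ε := hz ▸ Complex.re_le_norm z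
    nlinarith [mul_nonneg (mul_nonneg hlam.le (by linarith : (0:ℝ) ≤ 1 + ε - z.re)) hx0.le]
  -- step 2
  have hstep2 : (∫ x, Real.exp (lam * ε * x) * g x ∂μ) ≤ 1 + lam * ε * ψ := by
    have : (∫ x, Real.exp (lam * ε * x) * g x ∂μ) ≤
        ∫ x, (g x + lam * ε * F ε x) ∂μ := by
      refine integral_mono_of_nonneg
        (ae_restrict_of_forall_mem measurableSet_Ioi (fun x hx => mul_nonneg (Real.exp_pos _).le (hgnonneg x)))
        (hgint.add (hFint.const_mul _)) ?_
      refine ae_restrict_of_forall_mem measurableSet_Ioi (fun x hx => ?_)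
      have hx0 : (0:ℝ) < x := hx
      have ht : 0 ≤ lam * ε * x := mul_nonneg (mul_nonneg hlam.le hε0.le) hx0.le
      -- exp t ≤ 1 + t exp t
      have hkey : Real.exp (lam * ε * x) ≤ 1 + lam * ε * x * Real.exp (lam * ε * x) := by
        have h2 := Real.add_one_le_exp (-(lam * ε * x))
        have h3 : Real.exp (-(lam * ε * x)) * Real.exp (lam * ε * x) = 1 := by
          rw [← Real.exp_add]; simp
        nlinarith [Real.exp_pos (lam * ε * x)]
      calc Real.exp (lam * ε * x) * g x
          ≤ (1 + lam * ε * x * Real.exp (lam * ε * x)) * g x :=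
            mul_le_mul_of_nonneg_right hkey (hgnonneg x)
        _ = g x + lam * ε * (x * Real.exp (lam * ε * x) * g x) := by ring
    rw [integral_add hgint (hFint.const_mul _), integral_const_mul, hgprob] at this
    exact this
  -- step 3
  have hstep3 : 1 + lam * ε * ψ < 1 + (b:ℝ) * ε := by
    have : lam * ψ < b := hεlt
    nlinarith
  have hstep4 : 1 + (b:ℝ) * ε ≤ (1 + ε) ^ b := one_add_mul_le_pow (by linarith) b
  rw [hz]
  calc ‖Gstar (lam - lam * z)‖ ≤ ∫ x, Real.exp (lam * ε * x) * g x ∂μ := hstep1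
    _ ≤ 1 + lam * ε * ψ := hstep2
    _ < 1 + (b:ℝ) * ε := hstep3
    _ ≤ (1 + ε) ^ b := hstep4
end
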